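/- Let T be an essentially small triangulated category in which every object is a finite direct sum of indecomposables, and let M be an indecomposable object. Define T^{≤0}_M as the additive closure of indecomposables Y admitting a path M ⇝ Y, and T^{≥0}_M as the additive closure of indecomposables Z such that there is no path M ⇝ Z[-1]. Then (T^{≤0}_M, T^{≥0}_M) is a split t-structure on T. -/

import Mathlib

/-!
STATEMENT 12: Let `T` be an essentially small triangulated category in which every object
is a finite direct sum of indecomposables, and let `M` be indecomposable.  Let `T^{≤0}_M`
be the additive closure of the indecomposables `Y` with a path `M ⇝ Y`, and `T^{≥0}_M` the
additive closure of the indecomposables `Z` with no path `M ⇝ Z⟦-1⟧`.  Then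
`(T^{≤0}_M, T^{≥0}_M)` is a split t-structure on `T`.
-/
open CategoryTheory Category Limits Pretriangulated

section PathsAndBlocks

variable {C : Type*} [Category C] [Preadditive C] [HasZeroObject C] [HasShift C ℤ]
  [∀ n : ℤ, (shiftFunctor C n).Additive] [Pretriangulated C]
  [HasBinaryBiproducts C] [HasFiniteBiproducts C]

/-- An object is indecomposable if it is non-zero and has no non-trivial
direct sum decomposition. -/
def IsIndec (X : C) : Prop :=
  ¬ IsZero X ∧ ∀ Y Z : C, (X ≅ Y ⊞ Z) → IsZero Y ∨ IsZero Z

/-- A single step of a path: both objects are indecomposable and either there is a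
non-zero morphism `X ⟶ Y` or `Y = X⟦1⟧`. -/
def PathStep (X Y : C) : Prop :=
  IsIndec X ∧ IsIndec Y ∧ ((∃ f : X ⟶ Y, f ≠ 0) ∨ Nonempty (Y ≅ X⟦(1 : ℤ)⟧))

/-- There is a path `X ⇝ Y`: a finite sequence of path steps. -/
def HasPath : C → C → Prop := Relation.ReflTransGen PathStep

/-- There is a walk from `X` to `Y`: a finite sequence of forward or backward path steps. -/
def HasWalk : C → C → Prop := Relation.ReflTransGen (fun X Y => PathStep X Y ∨ PathStep Y X)

/-- Every object is a finite direct sum of indecomposable objects. -/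
def AllObjectsDecompose : Prop :=
  ∀ X : C, ∃ (n : ℕ) (G : Fin n → C), (∀ i, IsIndec (G i)) ∧ Nonempty (X ≅ ⨁ G)

variable (C) in
/-- A non-trivial decomposition of the triangulated category `C` into a product of two
triangulated subcategories: two iso-closed, shift-closed classes of objects, each
containing a non-zero object, with no non-zero morphisms between them in either
direction, such that every object is a direct sum of an object of each. -/
def IsProductDecomp (P Q : C → Prop) : Prop :=
  (∀ {X Y : C}, (X ≅ Y) → P X → P Y) ∧ (∀ {X Y : C}, (X ≅ Y) → Q X → Q Y) ∧
  (∃ X, P X ∧ ¬ IsZero X) ∧ (∃ X, Q X ∧ ¬ IsZero X) ∧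
  (∀ (X Y : C), P X → Q Y → ∀ f : X ⟶ Y, f = 0) ∧
  (∀ (X Y : C), Q X → P Y → ∀ f : X ⟶ Y, f = 0) ∧
  (∀ (X : C) (n : ℤ), P X → P (X⟦n⟧)) ∧ (∀ (X : C) (n : ℤ), Q X → Q (X⟦n⟧)) ∧
  (∀ X : C, ∃ X' X'' : C, P X' ∧ Q X'' ∧ Nonempty (X ≅ X' ⊞ X''))

variable (C) in
/-- `C` is a block: it admits no non-trivial product decomposition. -/
def IsBlock : Prop := ¬ ∃ P Q : C → Prop, IsProductDecomp C P Q

end PathsAndBlocks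

/-- `X` lies in the additive closure of the class `S` of objects. -/
def memAdd {C : Type*} [Category C] [Preadditive C] [HasBinaryBiproducts C]
    [HasFiniteBiproducts C] (S : C → Prop) (X : C) : Prop :=
  ∃ (n : ℕ) (G : Fin n → C) (_ : ∀ i, S (G i)) (Z : C), Nonempty ((X ⊞ Z) ≅ ⨁ G)

section AuxLemmas

variable {C : Type*} [Category C] [Preadditive C] [HasZeroObject C] [HasShift C ℤ]
  [∀ n : ℤ, (shiftFunctor C n).Additive] [Pretriangulated C]
  [HasBinaryBiproducts C] [HasFiniteBiproducts C]

set_option linter.unusedSectionVars false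

lemma myShiftPBB (n : ℤ) : PreservesBinaryBiproducts (shiftFunctor C n) :=
  preservesBinaryBiproducts_of_preservesBiproducts _

lemma myIsZero_shift_iff (X : C) (n : ℤ) : IsZero (X⟦n⟧) ↔ IsZero X := by
  rw [IsZero.iff_id_eq_zero, IsZero.iff_id_eq_zero]
  constructor
  · intro h
    apply (shiftFunctor C n).map_injective
    rw [(shiftFunctor C n).map_id, h, (shiftFunctor C n).map_zero]
  · intro h
    rw [← (shiftFunctor C n).map_id, h, (shiftFunctor C n).map_zero]

lemma myIndec_of_iso {X Y : C} (e : X ≅ Y) (hX : IsIndec X) : IsIndec Y :=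
  ⟨fun h => hX.1 (h.of_iso e), fun U V e' => hX.2 U V (e ≪≫ e')⟩

lemma myIndec_shift {X : C} (hX : IsIndec X) (n : ℤ) : IsIndec (X⟦n⟧) := by
  refine ⟨fun h => hX.1 ((myIsZero_shift_iff X n).mp h), fun U V e => ?_⟩
  have := myShiftPBB (C := C) (-n)
  have e2 : X ≅ U⟦-n⟧ ⊞ V⟦-n⟧ :=
    (shiftEquiv C n).unitIso.app X ≪≫ (shiftFunctor C (-n)).mapIso e ≪≫
      (shiftFunctor C (-n)).mapBiprod U V
  rcases hX.2 _ _ e2 with h | h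
  · exact Or.inl ((myIsZero_shift_iff U (-n)).mp h)
  · exact Or.inr ((myIsZero_shift_iff V (-n)).mp h)

/-- Extend a path along an isomorphism. -/
lemma myHasPath_of_iso {M Y Y' : C} (hY : IsIndec Y) (e : Y ≅ Y')
    (h : HasPath M Y) : HasPath M Y' := by
  refine Relation.ReflTransGen.tail h ⟨hY, myIndec_of_iso e hY, Or.inl ⟨e.hom, fun h0 => ?_⟩⟩
  exact hY.1 (by rw [IsZero.iff_id_eq_zero, ← e.hom_inv_id, h0, zero_comp])

/-- Extend a path by a shift by `1`. -/
lemma myHasPath_shift_one {M Y : C} (hY : IsIndec Y) (h : HasPath M Y) :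
    HasPath M (Y⟦(1:ℤ)⟧) :=
  Relation.ReflTransGen.tail h ⟨hY, myIndec_shift hY 1, Or.inr ⟨Iso.refl _⟩⟩

/-- Extend a path along a nonzero morphism between indecomposables. -/
lemma myHasPath_of_hom {M Y Z : C} (hY : IsIndec Y) (hZ : IsIndec Z)
    (f : Y ⟶ Z) (hf : f ≠ 0) (h : HasPath M Y) : HasPath M Z :=
  Relation.ReflTransGen.tail h ⟨hY, hZ, Or.inl ⟨f, hf⟩⟩

end AuxLemmas
open ZeroObject
section AuxMemAdd

variable {C : Type*} [Category C] [Preadditive C] [HasZeroObject C] [HasShift C ℤ]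
  [∀ n : ℤ, (shiftFunctor C n).Additive] [Pretriangulated C]
  [HasBinaryBiproducts C] [HasFiniteBiproducts C]

set_option linter.unusedSectionVars false

lemma myMemAdd_of_iso {S : C → Prop} {X Y : C} (e : X ≅ Y) (h : memAdd S X) :
    memAdd S Y := by
  obtain ⟨n, G, hG, Z, ⟨e'⟩⟩ := h
  exact ⟨n, G, hG, Z, ⟨(biprod.mapIso e.symm (Iso.refl Z)) ≪≫ e'⟩⟩

lemma myMemAdd_mono {S S' : C → Prop} (h : ∀ Y, S Y → S' Y) {X : C}
    (hX : memAdd S X) : memAdd S' X := by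
  obtain ⟨n, G, hG, Z, ⟨e⟩⟩ := hX
  exact ⟨n, G, fun i => h _ (hG i), Z, ⟨e⟩⟩

/-- A biproduct of objects of `S` over any finite index type lies in the additive
closure of `S`. -/
lemma myMemAdd_biproduct {J : Type} [Fintype J] {S : C → Prop} (G : J → C)
    (hG : ∀ j, S (G j)) : memAdd S (⨁ G) := by
  obtain ⟨m, ⟨e⟩⟩ := Finite.exists_equiv_fin J
  refine ⟨m, G ∘ e.symm, fun i => hG _, (0 : C), ⟨?_⟩⟩
  refine (isoBiprodZero (isZero_zero C)).symm ≪≫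
    biproduct.whiskerEquiv (f := G) (g := G ∘ e.symm) e
      (fun j => eqToIso (congrArg G (e.symm_apply_apply j)))

/-- Any morphism between objects of additive closures of `S`, `S'` vanishes provided all
morphisms from `S`-objects to `S'`-objects vanish. -/
lemma myMemAdd_hom_zero {S S' : C → Prop}
    (h : ∀ Y Z : C, S Y → S' Z → ∀ g : Y ⟶ Z, g = 0) {X Y : C}
    (hX : memAdd S X) (hY : memAdd S' Y) (f : X ⟶ Y) : f = 0 := by
  obtain ⟨n, G, hG, Z, ⟨e⟩⟩ := hX
  obtain ⟨n', G', hG', Z', ⟨e'⟩⟩ := hY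
  have hF : e.inv ≫ biprod.fst ≫ f ≫ biprod.inl ≫ e'.hom = 0 := by
    apply biproduct.hom_ext
    intro j
    apply biproduct.hom_ext'
    intro i
    rw [h _ _ (hG i) (hG' j) (biproduct.ι G i ≫ (e.inv ≫ biprod.fst ≫ f ≫ biprod.inl ≫ e'.hom) ≫ biproduct.π G' j)]
    simp
  have : f = biprod.inl ≫ e.hom ≫ (e.inv ≫ biprod.fst ≫ f ≫ biprod.inl ≫ e'.hom) ≫ e'.inv ≫ biprod.fst := by
    simp
  rw [this, hF]
  simp

end AuxMemAdd
section AuxSplit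

variable {C : Type*} [Category C] [Preadditive C] [HasZeroObject C] [HasShift C ℤ]
  [∀ n : ℤ, (shiftFunctor C n).Additive] [Pretriangulated C]
  [HasBinaryBiproducts C] [HasFiniteBiproducts C]

set_option linter.unusedSectionVars false

/-- Splitting a finite biproduct along a predicate on the index type. -/
noncomputable def mySplitBiproduct {J : Type} [Fintype J] (G : J → C) (p : J → Prop)
    [DecidablePred p] :
    (⨁ G) ≅ (⨁ Subtype.restrict p G) ⊞ (⨁ Subtype.restrict (fun j => ¬ p j) G) where
  hom := biprod.lift (biproduct.toSubtype G p) (biproduct.toSubtype G _)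
  inv := biprod.desc (biproduct.fromSubtype G p) (biproduct.fromSubtype G _)
  hom_inv_id := by
    rw [biprod.lift_desc]
    apply biproduct.hom_ext
    intro j
    apply biproduct.hom_ext'
    intro i
    by_cases h : p i <;> by_cases h' : p j <;>
      simp [biproduct.toSubtype_fromSubtype, biproduct.ι_π, h, h']
  inv_hom_id := by
    ext : 1
    · apply biprod.hom_ext <;> simp
      · apply biproduct.hom_ext
        intro j
        apply biproduct.hom_ext'
        intro i
        have hne : (i : J) ≠ (j : J) := fun hh => j.2 (hh ▸ i.2)
        simp only [Category.assoc, biproduct.ι_fromSubtype_assoc, biproduct.toSubtype_π,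
          zero_comp, comp_zero]
        exact (biproduct.ι_fromSubtype_assoc G p i _).trans (biproduct.ι_π_ne _ hne)
    · apply biprod.hom_ext <;> simp
      · apply biproduct.hom_ext
        intro j
        apply biproduct.hom_ext'
        intro i
        have hne : (i : J) ≠ (j : J) := fun hh => i.2 (hh ▸ j.2)
        simp only [Category.assoc, biproduct.ι_fromSubtype_assoc, biproduct.toSubtype_π,
          zero_comp, comp_zero]
        erw [biproduct.ι_fromSubtype_assoc]
        exact biproduct.ι_π_ne _ hne

end AuxSplit
section AuxMain

variable {C : Type*} [Category C] [Preadditive C] [HasZeroObject C] [HasShift C ℤ]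
  [∀ n : ℤ, (shiftFunctor C n).Additive] [Pretriangulated C]
  [HasBinaryBiproducts C] [HasFiniteBiproducts C]

set_option linter.unusedSectionVars false

/-- The `≤ n` part of the t-structure generated by paths from `M`. -/
def myLE (M : C) (n : ℤ) : C → Prop :=
  memAdd (fun Y => IsIndec Y ∧ HasPath M (Y⟦n⟧))

/-- The `≥ n` part of the t-structure generated by paths from `M`. -/
def myGE (M : C) (n : ℤ) : C → Prop :=
  memAdd (fun Z => IsIndec Z ∧ ¬ HasPath M (Z⟦n - 1⟧))

lemma myHasPath_iff_of_iso {M Y Y' : C} (hY : IsIndec Y) (e : Y ≅ Y') :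
    HasPath M Y ↔ HasPath M Y' :=
  ⟨myHasPath_of_iso hY e, myHasPath_of_iso (myIndec_of_iso e hY) e.symm⟩

lemma myHasPath_shift_iff (M : C) {Y : C} (hY : IsIndec Y) {a : ℤ} (h : a = 0) :
    HasPath M (Y⟦a⟧) ↔ HasPath M Y :=
  myHasPath_iff_of_iso (myIndec_shift hY a)
    (eqToIso (by rw [h]) ≪≫ (shiftFunctorZero C ℤ).app Y)

lemma myHasPath_shift_shift_iff (M : C) {Y : C} (hY : IsIndec Y) (a b c : ℤ)
    (h : a + b = c) : HasPath M ((Y⟦a⟧)⟦b⟧) ↔ HasPath M (Y⟦c⟧) :=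
  (myHasPath_iff_of_iso (myIndec_shift hY c) ((shiftFunctorAdd' C a b c h).app Y)).symm

lemma myLE_shift (M : C) (n a n' : ℤ) (h : a + n' = n) (X : C) (hX : myLE M n X) :
    myLE M n' (X⟦a⟧) := by
  obtain ⟨m, G, hG, Z, ⟨e⟩⟩ := hX
  have := myShiftPBB (C := C) a
  refine ⟨m, fun i => (G i)⟦a⟧, fun i => ⟨myIndec_shift (hG i).1 a, ?_⟩, Z⟦a⟧, ⟨?_⟩⟩
  · exact (myHasPath_shift_shift_iff M (hG i).1 a n' n h).mpr (hG i).2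
  · exact ((shiftFunctor C a).mapBiprod X Z).symm ≪≫ (shiftFunctor C a).mapIso e ≪≫
      (shiftFunctor C a).mapBiproduct G

lemma myGE_shift (M : C) (n a n' : ℤ) (h : a + n' = n) (X : C) (hX : myGE M n X) :
    myGE M n' (X⟦a⟧) := by
  obtain ⟨m, G, hG, Z, ⟨e⟩⟩ := hX
  have := myShiftPBB (C := C) a
  refine ⟨m, fun i => (G i)⟦a⟧, fun i => ⟨myIndec_shift (hG i).1 a, fun hp => (hG i).2 ?_⟩,
    Z⟦a⟧, ⟨?_⟩⟩
  · exact (myHasPath_shift_shift_iff M (hG i).1 a (n' - 1) (n - 1) (by omega)).mp hp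
  · exact ((shiftFunctor C a).mapBiprod X Z).symm ≪≫ (shiftFunctor C a).mapIso e ≪≫
      (shiftFunctor C a).mapBiproduct G

/-- The split truncation triangle. -/
lemma myExistsTriangle (hdec : AllObjectsDecompose (C := C)) (M A : C) :
    ∃ (X Y : C) (_ : myLE M 0 X) (_ : myGE M 1 Y) (f : X ⟶ A) (g : A ⟶ Y),
      Triangle.mk f g (0 : Y ⟶ X⟦(1 : ℤ)⟧) ∈ distTriang C := by
  classical
  obtain ⟨n, G, hGi, ⟨e⟩⟩ := hdec A
  set p : Fin n → Prop := fun i => HasPath M (G i) with hp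
  refine ⟨⨁ Subtype.restrict p G, ⨁ Subtype.restrict (fun j => ¬ p j) G, ?_, ?_, ?_⟩
  · exact myMemAdd_biproduct _ fun j =>
      ⟨hGi j.1, (myHasPath_shift_iff M (hGi j.1) rfl).mpr j.2⟩
  · exact myMemAdd_biproduct _ fun j =>
      ⟨hGi j.1, fun hpath => j.2 ((myHasPath_shift_iff M (hGi j.1) (by norm_num)).mp hpath)⟩
  · set φ : A ≅ _ ⊞ _ := e ≪≫ mySplitBiproduct G p
    clear_value φ
    refine ⟨biprod.inl ≫ φ.inv, φ.hom ≫ biprod.snd, ?_⟩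
    refine isomorphic_distinguished _ (binaryBiproductTriangle_distinguished (⨁ Subtype.restrict p G) (⨁ Subtype.restrict (fun j => ¬ p j) G)) _ ?_
    refine Triangle.isoMk _ _ (Iso.refl _) φ (Iso.refl _) ?_ ?_ ?_ <;> dsimp
    · exact (Category.assoc _ _ _).trans ((congrArg _ φ.inv_hom_id).trans ((Category.comp_id _).trans (Category.id_comp _).symm))
    · exact Category.comp_id _
    · exact zero_comp.trans comp_zero.symm

end AuxMain
open Triangulated in
theorem split_tStructure_from_indecomposable
    {C : Type*} [Category C] [Preadditive C] [HasZeroObject C] [HasShift C ℤ]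
    [∀ n : ℤ, (shiftFunctor C n).Additive] [Pretriangulated C]
    [HasBinaryBiproducts C] [HasFiniteBiproducts C] [EssentiallySmall C]
    (hdec : AllObjectsDecompose (C := C)) (M : C) (hM : IsIndec M) :
    ∃ t : TStructure C,
      (∀ X : C, t.le 0 X ↔ memAdd (fun Y => IsIndec Y ∧ HasPath M Y) X) ∧
      (∀ X : C, t.ge 0 X ↔ memAdd (fun Z => IsIndec Z ∧ ¬ HasPath M (Z⟦(-1 : ℤ)⟧)) X) ∧
      (∀ X : C, ∃ (P Q : C) (_ : t.ge 1 P) (_ : t.le (-1) Q)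
        (f : X ⟶ P) (h : Q ⟶ X⟦(1 : ℤ)⟧),
        Triangle.mk f (0 : P ⟶ Q) h ∈ distTriang C) := by
  have hzero : ∀ ⦃X Y : C⦄ (f : X ⟶ Y), myLE M 0 X → myGE M 1 Y → f = 0 := by
    intro X Y f hX hY
    refine myMemAdd_hom_zero (S := fun Y => IsIndec Y ∧ HasPath M (Y⟦(0:ℤ)⟧))
      (S' := fun Z => IsIndec Z ∧ ¬ HasPath M (Z⟦(1:ℤ) - 1⟧)) ?_ hX hY f
    intro Y' Z' hY' hZ' g
    by_contra hg
    refine hZ'.2 ((myHasPath_shift_iff M hZ'.1 (by norm_num)).mpr ?_)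
    exact myHasPath_of_hom hY'.1 hZ'.1 g hg ((myHasPath_shift_iff M hY'.1 rfl).mp hY'.2)
  let t : TStructure C :=
    { le := myLE M
      ge := myGE M
      le_isClosedUnderIsomorphisms := fun n => ⟨fun e h => myMemAdd_of_iso e h⟩
      ge_isClosedUnderIsomorphisms := fun n => ⟨fun e h => myMemAdd_of_iso e h⟩
      le_shift := myLE_shift M
      ge_shift := myGE_shift M
      zero' := hzero
      le_zero_le := by
        intro X hX
        refine myMemAdd_mono (fun Y hY => ⟨hY.1, ?_⟩) hX
        exact myHasPath_shift_one hY.1 ((myHasPath_shift_iff M hY.1 rfl).mp hY.2)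
      ge_one_le := by
        intro X hX
        refine myMemAdd_mono (fun Z hZ => ⟨hZ.1, fun hp => hZ.2 ?_⟩) hX
        have h1 : HasPath M ((Z⟦(0:ℤ)-1⟧)⟦(1:ℤ)⟧) :=
          myHasPath_shift_one (myIndec_shift hZ.1 _) hp
        have h2 : HasPath M (Z⟦(0:ℤ)⟧) :=
          (myHasPath_shift_shift_iff M hZ.1 ((0:ℤ)-1) 1 0 (by norm_num)).mp h1
        exact (myHasPath_shift_iff M hZ.1 (by norm_num)).mpr
          ((myHasPath_shift_iff M hZ.1 rfl).mp h2)
      exists_triangle_zero_one := by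
        intro A
        obtain ⟨X, Y, hX, hY, f, g, hT⟩ := myExistsTriangle hdec M A
        exact ⟨X, Y, hX, hY, f, g, 0, hT⟩ }
  refine ⟨t, ?_, ?_, ?_⟩
  · intro X
    show memAdd (fun Y => IsIndec Y ∧ HasPath M (Y⟦(0:ℤ)⟧)) X ↔ _
    constructor
    · exact myMemAdd_mono fun Y hY =>
        ⟨hY.1, (myHasPath_shift_iff M hY.1 rfl).mp hY.2⟩
    · exact myMemAdd_mono fun Y hY =>
        ⟨hY.1, (myHasPath_shift_iff M hY.1 rfl).mpr hY.2⟩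
  · intro X
    have h01 : ((0:ℤ) - 1) = -1 := by norm_num
    show memAdd (fun Z => IsIndec Z ∧ ¬ HasPath M (Z⟦(0:ℤ) - 1⟧)) X ↔ _
    constructor
    · exact myMemAdd_mono fun Z hZ => ⟨hZ.1, by have := hZ.2; rwa [h01] at this⟩
    · exact myMemAdd_mono fun Z hZ => ⟨hZ.1, by rw [h01]; exact hZ.2⟩
  · intro X
    obtain ⟨Xle, Xge, hle, hge, a, b, hT⟩ := myExistsTriangle hdec M X
    refine ⟨Xge, Xle⟦(1:ℤ)⟧, hge, myLE_shift M 0 1 (-1) (by norm_num) Xle hle,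
      b, -a⟦(1:ℤ)⟧', rot_of_distTriang _ hT⟩
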